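/- arXiv:1810.12457 — 3 statements merged into one kernel-verified Lean document; each statement's English description precedes it below -/
import Mathlib

section
/- Smoothness inequality for the conjugate of a strongly convex function: Let X ⊆ ℝ^d be closed and convex, let ‖·‖ be a norm on ℝ^d with dual norm ‖z‖_* = sup{⟨z, x⟩ : ‖x‖ ≤ 1}, let ψ : ℝ^d → ℝ be 1-strongly convex on X with respect to ‖·‖, and let α > 0. Define ψ*_α(z) = sup_{x ∈ X} ( ⟨z, x⟩ − ψ(x)/α ) and assume for each z the supremum is attained at a unique point y(z) ∈ X. Then for all z, g ∈ ℝ^d, ψ*_α(z − g) ≤ ψ*_α(z) − ⟨y(z), g⟩ + α·‖g‖_*². -/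
open Finset RealInnerProductSpace

/-- `N` is a norm on `ℝ^d` (triangle inequality, absolute homogeneity, definiteness). -/
def IsNorm {d : ℕ} (N : EuclideanSpace ℝ (Fin d) → ℝ) : Prop :=
  (∀ x y, N (x + y) ≤ N x + N y) ∧ (∀ (c : ℝ) x, N (c • x) = |c| * N x) ∧
    (∀ x, N x = 0 ↔ x = 0)

/-- The dual norm `‖z‖_* = sup {⟨z, x⟩ : N x ≤ 1}` of a norm `N` on `ℝ^d`. -/
noncomputable def dualNorm {d : ℕ} (N : EuclideanSpace ℝ (Fin d) → ℝ)
    (z : EuclideanSpace ℝ (Fin d)) : ℝ :=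
  sSup {r : ℝ | ∃ x : EuclideanSpace ℝ (Fin d), N x ≤ 1 ∧ r = ⟪z, x⟫}

/-- `ψ` is 1-strongly convex on `X` with respect to the norm `N`. -/
def StronglyConvexOnWith {d : ℕ} (X : Set (EuclideanSpace ℝ (Fin d)))
    (N : EuclideanSpace ℝ (Fin d) → ℝ) (ψ : EuclideanSpace ℝ (Fin d) → ℝ) : Prop :=
  ∀ ⦃x⦄, x ∈ X → ∀ ⦃y⦄, y ∈ X → ∀ ⦃θ : ℝ⦄, 0 ≤ θ → θ ≤ 1 →
    ψ (θ • x + (1 - θ) • y) ≤ θ * ψ x + (1 - θ) * ψ y - θ * (1 - θ) / 2 * N (x - y) ^ 2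

variable {d : ℕ} {N : EuclideanSpace ℝ (Fin d) → ℝ}

lemma IsNorm.zero (hN : IsNorm N) : N 0 = 0 := (hN.2.2 0).2 rfl

lemma IsNorm.nonneg (hN : IsNorm N) (x : EuclideanSpace ℝ (Fin d)) : 0 ≤ N x := by
  have h := hN.1 x (-x)
  have h2 : N (-x) = N x := by
    have := hN.2.1 (-1) x
    simpa using this
  have h0 : N (x + -x) = 0 := by simpa using hN.zero
  nlinarith

lemma IsNorm.lipsch (hN : IsNorm N) : ∃ C : ℝ, 0 ≤ C ∧ ∀ x, N x ≤ C * ‖x‖ := by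
  classical
  refine ⟨∑ i : Fin d, N (EuclideanSpace.single i 1), Finset.sum_nonneg fun i _ => hN.nonneg _, ?_⟩
  intro x
  have hx : x = ∑ i : Fin d, x i • EuclideanSpace.single i (1:ℝ) := by
    ext j
    rw [WithLp.ofLp_sum, Finset.sum_apply]
    simp [EuclideanSpace.single_apply, mul_comm]
  have hsum : ∀ (s : Finset (Fin d)) (f : Fin d → EuclideanSpace ℝ (Fin d)),
      N (∑ i ∈ s, f i) ≤ ∑ i ∈ s, N (f i) := by
    intro s
    induction s using Finset.induction with
    | empty => intro f; simp [hN.zero]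
    | insert _ _ hnot ih =>
      intro f
      rw [Finset.sum_insert hnot, Finset.sum_insert hnot]
      exact le_trans (hN.1 _ _) (by linarith [ih f])
  calc N x = N (∑ i : Fin d, x i • EuclideanSpace.single i (1:ℝ)) := by rw [← hx]
    _ ≤ ∑ i : Fin d, N (x i • EuclideanSpace.single i (1:ℝ)) := hsum _ _
    _ ≤ ∑ i : Fin d, N (EuclideanSpace.single i 1) * ‖x‖ := by
        apply Finset.sum_le_sum
        intro i _
        rw [hN.2.1]
        have hxi : |x i| ≤ ‖x‖ := by
          have := abs_real_inner_le_norm (EuclideanSpace.single i (1:ℝ)) x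
          simpa [EuclideanSpace.inner_single_left] using this
        have := hN.nonneg (EuclideanSpace.single i (1:ℝ))
        nlinarith
    _ = (∑ i : Fin d, N (EuclideanSpace.single i 1)) * ‖x‖ := by rw [Finset.sum_mul]

lemma IsNorm.continuous (hN : IsNorm N) : Continuous N := by
  obtain ⟨C, hC0, hC⟩ := hN.lipsch
  have hm : ∀ a b : EuclideanSpace ℝ (Fin d), N a - N b ≤ C * ‖a - b‖ := by
    intro a b
    have h1 : N a ≤ N (a - b) + N b := by
      have := hN.1 (a - b) b; simpa using this
    linarith [hC (a - b)]
  have : LipschitzWith (Real.toNNReal C) N := by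
    apply LipschitzWith.of_dist_le_mul
    intro a b
    rw [Real.dist_eq, dist_eq_norm, abs_sub_le_iff]
    constructor
    · have := hm a b; rwa [Real.coe_toNNReal _ hC0]
    · have := hm b a; rw [Real.coe_toNNReal _ hC0]
      rwa [norm_sub_rev] at this
  exact this.continuous

lemma IsNorm.lower (hN : IsNorm N) : ∀ g x : EuclideanSpace ℝ (Fin d),
    ⟪g, x⟫ ≤ dualNorm N g * N x := by
  intro g x
  by_cases hx : x = 0
  · simp [hx, hN.zero]
  -- lower bound m
  have hsne : (Metric.sphere (0 : EuclideanSpace ℝ (Fin d)) 1).Nonempty := by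
    refine ⟨‖x‖⁻¹ • x, ?_⟩
    rw [mem_sphere_zero_iff_norm, norm_smul, norm_inv, norm_norm,
      inv_mul_cancel₀ (norm_ne_zero_iff.mpr hx)]
  obtain ⟨x₀, hx₀s, hx₀min⟩ := (isCompact_sphere (0 : EuclideanSpace ℝ (Fin d)) 1).exists_isMinOn
    hsne hN.continuous.continuousOn
  have hx₀ne : x₀ ≠ 0 := by
    intro h
    rw [mem_sphere_zero_iff_norm, h, norm_zero] at hx₀s
    norm_num at hx₀s
  set m := N x₀ with hm
  have hmpos : 0 < m := lt_of_le_of_ne (hN.nonneg x₀) (fun h => hx₀ne ((hN.2.2 x₀).1 h.symm))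
  have hlow : ∀ w : EuclideanSpace ℝ (Fin d), m * ‖w‖ ≤ N w := by
    intro w
    by_cases hw : w = 0
    · simp [hw, hN.zero]
    · have hws : ‖w‖⁻¹ • w ∈ Metric.sphere (0 : EuclideanSpace ℝ (Fin d)) 1 := by
        rw [mem_sphere_zero_iff_norm, norm_smul, norm_inv, norm_norm,
          inv_mul_cancel₀ (norm_ne_zero_iff.mpr hw)]
      have h2 : N x₀ ≤ N (‖w‖⁻¹ • w) := hx₀min hws
      have hNw : N (‖w‖⁻¹ • w) = ‖w‖⁻¹ * N w := by
        rw [hN.2.1]; congr 1; rw [abs_of_nonneg (by positivity)]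
      rw [hNw] at h2
      have hwpos : 0 < ‖w‖ := norm_pos_iff.mpr hw
      have hcan : ‖w‖ * ‖w‖⁻¹ = 1 := mul_inv_cancel₀ hwpos.ne'
      nlinarith [h2, hwpos, hcan, hN.nonneg w]
  -- bdd above
  have hbdd : BddAbove {r : ℝ | ∃ w : EuclideanSpace ℝ (Fin d), N w ≤ 1 ∧ r = ⟪g, w⟫} := by
    refine ⟨‖g‖ * m⁻¹, ?_⟩
    rintro r ⟨w, hw1, rfl⟩
    have h1 : ‖w‖ ≤ m⁻¹ := by
      have h2 : m * ‖w‖ ≤ 1 := le_trans (hlow w) hw1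
      have hcan : m * m⁻¹ = 1 := mul_inv_cancel₀ hmpos.ne'
      nlinarith [h2, hmpos, hcan]
    calc ⟪g, w⟫ ≤ ‖g‖ * ‖w‖ := real_inner_le_norm g w
      _ ≤ ‖g‖ * m⁻¹ := by
          exact mul_le_mul_of_nonneg_left h1 (norm_nonneg g)
  -- main
  have hNx : 0 < N x :=
    lt_of_le_of_ne (hN.nonneg x) (fun h => hx ((hN.2.2 x).1 h.symm))
  have hmem : ⟪g, (N x)⁻¹ • x⟫ ∈ {r : ℝ | ∃ w : EuclideanSpace ℝ (Fin d), N w ≤ 1 ∧ r = ⟪g, w⟫} := by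
    refine ⟨(N x)⁻¹ • x, ?_, rfl⟩
    rw [hN.2.1, abs_of_nonneg (by positivity), inv_mul_cancel₀ hNx.ne']
  have hle := le_csSup hbdd hmem
  rw [real_inner_smul_right] at hle
  rw [← mul_le_mul_iff_right₀ (inv_pos.mpr hNx)]
  calc (N x)⁻¹ * ⟪g, x⟫ ≤ dualNorm N g := hle
    _ = (N x)⁻¹ * (dualNorm N g * N x) := by field_simp


/-- **Smoothness inequality for the conjugate of a strongly convex function.**
With `ψ*_α(z) = sup_{x ∈ X} (⟨z, x⟩ − ψ(x)/α)` attained at the unique point `y(z) ∈ X`,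
one has `ψ*_α(z − g) ≤ ψ*_α(z) − ⟨y(z), g⟩ + α ‖g‖_*²`. -/
theorem conjugate_smoothness {d : ℕ}
    (X : Set (EuclideanSpace ℝ (Fin d))) (hXcl : IsClosed X) (hXcv : Convex ℝ X)
    (N : EuclideanSpace ℝ (Fin d) → ℝ) (hN : IsNorm N)
    (ψ : EuclideanSpace ℝ (Fin d) → ℝ) (hψ : StronglyConvexOnWith X N ψ)
    (α : ℝ) (hα : 0 < α)
    (ψstar : EuclideanSpace ℝ (Fin d) → ℝ)
    (hψstar : ∀ w, IsLUB {r : ℝ | ∃ x ∈ X, r = ⟪w, x⟫ - ψ x / α} (ψstar w))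
    (y : EuclideanSpace ℝ (Fin d) → EuclideanSpace ℝ (Fin d))
    (hyX : ∀ w, y w ∈ X)
    (hattain : ∀ w, ψstar w = ⟪w, y w⟫ - ψ (y w) / α)
    (huniq : ∀ w x, x ∈ X → ψstar w = ⟪w, x⟫ - ψ x / α → x = y w) :
    ∀ z g : EuclideanSpace ℝ (Fin d),
      ψstar (z - g) ≤ ψstar z - ⟪y z, g⟫ + α * dualNorm N g ^ 2 := by
  intro z g
  set u := y z with hu
  set v := y (z - g) with hv
  set t := N (v - u) with ht
  set s := dualNorm N g with hs
  have ht0 : 0 ≤ t := hN.nonneg _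
  set c : ℝ := t ^ 2 / (2 * α) with hc
  have hc2 : 2 * α * c = t ^ 2 := by rw [hc]; field_simp
  have hc0 : 0 ≤ c := by positivity
  -- key inequality for each θ ∈ (0,1]
  have hkey : ∀ θ : ℝ, 0 < θ → θ ≤ 1 →
      ⟪z, v⟫ - ψ v / α ≤ ψstar z - (1 - θ) * c := by
    intro θ hθ0 hθ1
    have hxθ : θ • v + (1 - θ) • u ∈ X :=
      hXcv (hyX (z - g)) (hyX z) hθ0.le (by linarith) (by ring)
    have hub : ⟪z, θ • v + (1 - θ) • u⟫ - ψ (θ • v + (1 - θ) • u) / α ≤ ψstar z :=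
      (hψstar z).1 ⟨_, hxθ, rfl⟩
    have hsc := hψ (hyX (z - g)) (hyX z) hθ0.le hθ1
    rw [← ht] at hsc
    have hsc' : ψ (θ • v + (1 - θ) • u) / α
        ≤ (θ * ψ v + (1 - θ) * ψ u - θ * (1 - θ) / 2 * t ^ 2) / α := by gcongr
    have hexp : (θ * ψ v + (1 - θ) * ψ u - θ * (1 - θ) / 2 * t ^ 2) / α
        = θ * (ψ v / α) + (1 - θ) * (ψ u / α) - θ * (1 - θ) * c := by
      rw [hc]; field_simp
    rw [hexp] at hsc'
    have hinner : ⟪z, θ • v + (1 - θ) • u⟫ = θ * ⟪z, v⟫ + (1 - θ) * ⟪z, u⟫ := by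
      rw [inner_add_right, real_inner_smul_right, real_inner_smul_right]
    rw [hinner] at hub
    have hB : ψstar z = ⟪z, u⟫ - ψ u / α := hattain z
    rw [hB] at hub ⊢
    nlinarith [hub, hsc', hθ0]
  -- take θ → 0⁺
  have hA : ⟪z, v⟫ - ψ v / α ≤ ψstar z - c := by
    have hlim : Filter.Tendsto (fun θ : ℝ => ψstar z - (1 - θ) * c)
        (nhdsWithin 0 (Set.Ioi 0)) (nhds (ψstar z - (1 - 0) * c)) := by
      apply Filter.Tendsto.mono_left ?_ nhdsWithin_le_nhds
      exact ((continuous_const.sub ((continuous_const.sub continuous_id).mul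
        continuous_const)).tendsto 0)
    have hev : ∀ᶠ θ in nhdsWithin (0:ℝ) (Set.Ioi 0),
        ⟪z, v⟫ - ψ v / α ≤ ψstar z - (1 - θ) * c := by
      filter_upwards [Ioc_mem_nhdsGT_of_mem ⟨le_refl (0:ℝ), zero_lt_one⟩] with θ hθ
      exact hkey θ hθ.1 hθ.2
    have := ge_of_tendsto hlim hev
    simpa using this
  -- dual norm bound
  have hdual : ⟪g, u - v⟫ ≤ s * t := by
    have h1 := hN.lower g (u - v)
    have h2 : N (u - v) = t := by
      rw [ht, show u - v = (-1 : ℝ) • (v - u) by module, hN.2.1]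
      simp
    rwa [h2] at h1
  -- conclude
  have hval : ψstar (z - g) = ⟪z, v⟫ - ⟪g, v⟫ - ψ v / α := by
    rw [hattain (z - g), ← hv, inner_sub_left]
  have hguv : ⟪g, u - v⟫ = ⟪g, u⟫ - ⟪g, v⟫ := inner_sub_right g u v
  have hgy : ⟪y z, g⟫ = ⟪g, u⟫ := by rw [← hu]; exact real_inner_comm g u
  rw [hval, hgy]
  rw [hguv] at hdual
  have hst : s * t ≤ c + α * s ^ 2 := by
    nlinarith [hc2, sq_nonneg (t - α * s), sq_nonneg (α * s), hα]
  linarith [hA, hdual, hst]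
end

section
/- Dual averaging regret bound (bound on Ψ₁): Let X ⊆ ℝ^d be closed and convex, let ‖·‖ be a norm on ℝ^d with dual norm ‖·‖_*, let ψ : ℝ^d → ℝ be nonnegative and 1-strongly convex on X with respect to ‖·‖, and let α : ℕ → ℝ be positive and nonincreasing. Let ḡ(1), ḡ(2), … ∈ ℝ^d, define z̄(1) = 0 and z̄(t+1) = z̄(t) + ḡ(t), and for each t ≥ 1 let y(t) be a minimizer over X of x ↦ ⟨x, z̄(t)⟩ + ψ(x)/α(t−1). Then for every T ≥ 1 and every x* ∈ X, ∑_{t=1}^T ⟨ḡ(t), y(t) − x*⟩ ≤ ∑_{t=1}^T α(t−1)·‖ḡ(t)‖_*² + ψ(x*)/α(T). -/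
open Finset RealInnerProductSpace

namespace DAaux
variable {d : ℕ} {N : EuclideanSpace ℝ (Fin d) → ℝ}

lemma nzero (hN : IsNorm N) : N 0 = 0 := by
  have := hN.2.1 0 0
  simpa using this

lemma nneg (hN : IsNorm N) (x : EuclideanSpace ℝ (Fin d)) : N (-x) = N x := by
  have := hN.2.1 (-1) x
  simpa using this

lemma nnonneg (hN : IsNorm N) (x : EuclideanSpace ℝ (Fin d)) : 0 ≤ N x := by
  have h := hN.1 x (-x)
  rw [add_neg_cancel, nzero hN, nneg hN] at h
  linarith

lemma nsum (hN : IsNorm N) {ι : Type*} (s : Finset ι) (f : ι → EuclideanSpace ℝ (Fin d)) :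
    N (∑ i ∈ s, f i) ≤ ∑ i ∈ s, N (f i) := by
  classical
  induction s using Finset.cons_induction with
  | empty => simp [nzero hN]
  | cons a s ha ih =>
      rw [Finset.sum_cons, Finset.sum_cons]
      exact le_trans (hN.1 _ _) (by linarith)

lemma coord_le_norm (x : EuclideanSpace ℝ (Fin d)) (i : Fin d) : |x i| ≤ ‖x‖ := by
  have h1 : |x i| ^ 2 ≤ ∑ j, ‖x j‖ ^ 2 := by
    rw [show |x i| = ‖x i‖ from rfl]
    exact Finset.single_le_sum (f := fun j => ‖x j‖ ^ 2) (fun j _ => by positivity)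
      (Finset.mem_univ i)
  have h2 := EuclideanSpace.norm_eq x
  nlinarith [Real.sq_sqrt (show (0:ℝ) ≤ ∑ j, ‖x j‖ ^ 2 by positivity),
    Real.sqrt_nonneg (∑ j, ‖x j‖ ^ 2), abs_nonneg (x i), norm_nonneg x]

lemma decomp (x : EuclideanSpace ℝ (Fin d)) :
    x = ∑ i, x i • EuclideanSpace.single i (1:ℝ) := by
  ext j
  rw [WithLp.ofLp_sum, Finset.sum_apply]
  simp [EuclideanSpace.single_apply]

lemma upper (hN : IsNorm N) : ∃ C : ℝ, 0 ≤ C ∧ ∀ x, N x ≤ C * ‖x‖ := by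
  refine ⟨∑ i, N (EuclideanSpace.single i (1:ℝ)),
    Finset.sum_nonneg (fun i _ => nnonneg hN _), fun x => ?_⟩
  calc N x = N (∑ i, x i • EuclideanSpace.single i (1:ℝ)) := by rw [← decomp]
    _ ≤ ∑ i, N (x i • EuclideanSpace.single i (1:ℝ)) := nsum hN _ _
    _ = ∑ i, |x i| * N (EuclideanSpace.single i (1:ℝ)) := by
        simp [hN.2.1]
    _ ≤ ∑ i, ‖x‖ * N (EuclideanSpace.single i (1:ℝ)) :=
        Finset.sum_le_sum (fun i _ =>
          mul_le_mul_of_nonneg_right (coord_le_norm x i) (nnonneg hN _))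
    _ = (∑ i, N (EuclideanSpace.single i (1:ℝ))) * ‖x‖ := by
        rw [← Finset.mul_sum, mul_comm]

lemma ncont (hN : IsNorm N) : Continuous N := by
  obtain ⟨C, hC0, hC⟩ := upper hN
  have key : ∀ x y, N x - N y ≤ C * ‖x - y‖ := by
    intro x y
    have h1 : N x ≤ N (x - y) + N y := by
      have := hN.1 (x - y) y
      simpa using this
    have := hC (x - y)
    linarith
  have : LipschitzWith C.toNNReal N := by
    apply LipschitzWith.of_dist_le_mul
    intro x y
    rw [Real.dist_eq, Real.coe_toNNReal C hC0, dist_eq_norm]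
    rw [abs_sub_le_iff]
    constructor
    · exact key x y
    · have := key y x
      rwa [show ‖y - x‖ = ‖x - y‖ by rw [norm_sub_rev]] at this
  exact this.continuous

lemma lower (hN : IsNorm N) : ∃ m : ℝ, 0 < m ∧ ∀ x, m * ‖x‖ ≤ N x := by
  by_cases hd : ∀ x : EuclideanSpace ℝ (Fin d), x = 0
  · refine ⟨1, one_pos, fun x => ?_⟩
    rw [hd x]
    simp [nzero hN]
  · push_neg at hd
    obtain ⟨x₀, hx₀⟩ := hd
    have hS : (Metric.sphere (0 : EuclideanSpace ℝ (Fin d)) 1).Nonempty := by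
      refine ⟨‖x₀‖⁻¹ • x₀, ?_⟩
      have h0 : ‖x₀‖ ≠ 0 := norm_ne_zero_iff.2 hx₀
      simp [norm_smul, abs_of_nonneg (inv_nonneg.2 (norm_nonneg x₀)),
        inv_mul_cancel₀ h0]
    obtain ⟨u, huS, hmin⟩ := (isCompact_sphere (0 : EuclideanSpace ℝ (Fin d)) 1).exists_isMinOn
      hS (ncont hN).continuousOn
    rw [isMinOn_iff] at hmin
    have hu1 : ‖u‖ = 1 := by simpa using huS
    have hune : u ≠ 0 := by
      intro h; rw [h] at hu1; simp at hu1
    have hmpos : 0 < N u :=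
      lt_of_le_of_ne (nnonneg hN u) (fun h => hune ((hN.2.2 u).1 h.symm))
    refine ⟨N u, hmpos, fun x => ?_⟩
    rcases eq_or_ne x 0 with rfl | hx
    · simp [nzero hN]
    · have hnx : (0:ℝ) < ‖x‖ := norm_pos_iff.2 hx
      have husp : (‖x‖⁻¹ • x) ∈ Metric.sphere (0 : EuclideanSpace ℝ (Fin d)) 1 := by
        simp [norm_smul, abs_of_nonneg (inv_nonneg.2 hnx.le), inv_mul_cancel₀ hnx.ne']
      have := hmin _ husp
      rw [hN.2.1, abs_of_nonneg (inv_nonneg.2 hnx.le)] at this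
      calc N u * ‖x‖ ≤ (‖x‖⁻¹ * N x) * ‖x‖ :=
            mul_le_mul_of_nonneg_right this hnx.le
        _ = N x := by field_simp
    
lemma bdd (hN : IsNorm N) (g : EuclideanSpace ℝ (Fin d)) :
    BddAbove {r : ℝ | ∃ x : EuclideanSpace ℝ (Fin d), N x ≤ 1 ∧ r = ⟪g, x⟫} := by
  obtain ⟨m, hm, hml⟩ := lower hN
  refine ⟨‖g‖ / m, fun r hr => ?_⟩
  obtain ⟨x, hx1, rfl⟩ := hr
  have h1 : ⟪g, x⟫ ≤ ‖g‖ * ‖x‖ := real_inner_le_norm g x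
  have h2 : m * ‖x‖ ≤ 1 := le_trans (hml x) hx1
  have h3 : ‖x‖ ≤ 1 / m := by
    rw [le_div_iff₀ hm]; linarith
  calc ⟪g, x⟫ ≤ ‖g‖ * ‖x‖ := h1
    _ ≤ ‖g‖ * (1 / m) := mul_le_mul_of_nonneg_left h3 (norm_nonneg g)
    _ = ‖g‖ / m := by ring

lemma pair (hN : IsNorm N) (g w : EuclideanSpace ℝ (Fin d)) :
    ⟪g, w⟫ ≤ dualNorm N g * N w := by
  rcases eq_or_lt_of_le (nnonneg hN w) with h0 | hpos
  · have hw0 : w = 0 := (hN.2.2 w).1 h0.symm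
    simp [hw0, nzero hN]
  · set u := (N w)⁻¹ • w with hu
    have hNu : N u = 1 := by
      rw [hu, hN.2.1, abs_of_nonneg (inv_nonneg.2 hpos.le), inv_mul_cancel₀ hpos.ne']
    have hmem : ⟪g, u⟫ ∈ {r : ℝ | ∃ x : EuclideanSpace ℝ (Fin d), N x ≤ 1 ∧ r = ⟪g, x⟫} :=
      ⟨u, hNu.le, rfl⟩
    have hle : ⟪g, u⟫ ≤ dualNorm N g := le_csSup (bdd hN g) hmem
    have hinner : ⟪g, u⟫ = (N w)⁻¹ * ⟪g, w⟫ := real_inner_smul_right g w (N w)⁻¹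
    rw [hinner] at hle
    calc ⟪g, w⟫ = ((N w)⁻¹ * ⟪g, w⟫) * N w := by field_simp
      _ ≤ dualNorm N g * N w := mul_le_mul_of_nonneg_right hle hpos.le

end DAaux

namespace DAaux
lemma strong_min {d : ℕ} {X : Set (EuclideanSpace ℝ (Fin d))} (hXcv : Convex ℝ X)
    {N ψ : EuclideanSpace ℝ (Fin d) → ℝ} (hψ : StronglyConvexOnWith X N ψ)
    {a : ℝ} (ha : 0 < a) {yt : EuclideanSpace ℝ (Fin d)} (hyt : yt ∈ X)
    {z : EuclideanSpace ℝ (Fin d)}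
    (hmin : ∀ v ∈ X, ⟪yt, z⟫ + ψ yt / a ≤ ⟪v, z⟫ + ψ v / a)
    {v : EuclideanSpace ℝ (Fin d)} (hv : v ∈ X) (hA : 0 ≤ N (v - yt) ^ 2) :
    ⟪yt, z⟫ + ψ yt / a + N (v - yt) ^ 2 / (2 * a) ≤ ⟪v, z⟫ + ψ v / a := by
  set A := N (v - yt) ^ 2 / (2 * a) with hAdef
  have hA0 : 0 ≤ A := by positivity
  have claim : ∀ θ : ℝ, 0 < θ → θ ≤ 1 →
      ⟪yt, z⟫ + ψ yt / a + A ≤ ⟪v, z⟫ + ψ v / a + θ * A := by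
    intro θ hθ0 hθ1
    have hw : θ • v + (1 - θ) • yt ∈ X :=
      hXcv hv hyt hθ0.le (by linarith) (by ring)
    have h1 := hmin _ hw
    have h2 := hψ hv hyt hθ0.le hθ1
    have h3 : ⟪θ • v + (1 - θ) • yt, z⟫ = θ * ⟪v, z⟫ + (1 - θ) * ⟪yt, z⟫ := by
      rw [inner_add_left, real_inner_smul_left, real_inner_smul_left]
    rw [h3] at h1
    have h4 : ψ (θ • v + (1 - θ) • yt) / a ≤
        (θ * ψ v + (1 - θ) * ψ yt - θ * (1 - θ) / 2 * N (v - yt) ^ 2) / a :=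
      div_le_div_of_nonneg_right h2 ha.le
    have h5 : (θ * ψ v + (1 - θ) * ψ yt - θ * (1 - θ) / 2 * N (v - yt) ^ 2) / a
        = θ * (ψ v / a) + (1 - θ) * (ψ yt / a) - θ * (1 - θ) * A := by
      rw [hAdef]; field_simp
    rw [h5] at h4
    have h6 : ⟪yt, z⟫ + ψ yt / a ≤
        θ * ⟪v, z⟫ + (1 - θ) * ⟪yt, z⟫ + (θ * (ψ v / a) + (1 - θ) * (ψ yt / a)
          - θ * (1 - θ) * A) := by linarith
    nlinarith [h6, hθ0]
  refine le_of_forall_pos_le_add (fun ε hε => ?_)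
  have hθ0 : 0 < min 1 (ε / (A + 1)) := by
    apply lt_min one_pos
    positivity
  have hθ1 : min 1 (ε / (A + 1)) ≤ 1 := min_le_left _ _
  have := claim _ hθ0 hθ1
  have hbound : min 1 (ε / (A + 1)) * A ≤ ε := by
    have h7 : min 1 (ε / (A + 1)) ≤ ε / (A + 1) := min_le_right _ _
    have h8 : min 1 (ε / (A + 1)) * A ≤ (ε / (A + 1)) * A :=
      mul_le_mul_of_nonneg_right h7 hA0
    have h9 : (ε / (A + 1)) * A ≤ ε := by
      rw [div_mul_eq_mul_div, div_le_iff₀ (by linarith)]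
      nlinarith
    linarith
  linarith
end DAaux

/-- **Dual averaging regret bound (bound on Ψ₁).**  With `z̄(1) = 0`,
`z̄(t+1) = z̄(t) + ḡ(t)`, and `y(t)` a minimizer over `X` of
`x ↦ ⟨x, z̄(t)⟩ + ψ(x)/α(t−1)`, one has
`∑_{t=1}^T ⟨ḡ(t), y(t) − x*⟩ ≤ ∑_{t=1}^T α(t−1) ‖ḡ(t)‖_*² + ψ(x*)/α(T)`. -/
theorem dual_averaging_regret {d : ℕ}
    (X : Set (EuclideanSpace ℝ (Fin d))) (hXcl : IsClosed X) (hXcv : Convex ℝ X)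
    (N : EuclideanSpace ℝ (Fin d) → ℝ) (hN : IsNorm N)
    (ψ : EuclideanSpace ℝ (Fin d) → ℝ) (hψ0 : ∀ x, 0 ≤ ψ x)
    (hψ : StronglyConvexOnWith X N ψ)
    (α : ℕ → ℝ) (hαpos : ∀ t, 0 < α t) (hαdec : ∀ s t, s ≤ t → α t ≤ α s)
    (gbar : ℕ → EuclideanSpace ℝ (Fin d))
    (zbar : ℕ → EuclideanSpace ℝ (Fin d))
    (hz1 : zbar 1 = 0) (hzrec : ∀ t, 1 ≤ t → zbar (t + 1) = zbar t + gbar t)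
    (y : ℕ → EuclideanSpace ℝ (Fin d))
    (hyX : ∀ t, 1 ≤ t → y t ∈ X)
    (hymin : ∀ t, 1 ≤ t → ∀ v ∈ X,
      ⟪y t, zbar t⟫ + ψ (y t) / α (t - 1) ≤ ⟪v, zbar t⟫ + ψ v / α (t - 1))
    (T : ℕ) (hT : 1 ≤ T) (xstar : EuclideanSpace ℝ (Fin d)) (hxstar : xstar ∈ X) :
    ∑ t ∈ Icc 1 T, ⟪gbar t, y t - xstar⟫ ≤
      (∑ t ∈ Icc 1 T, α (t - 1) * dualNorm N (gbar t) ^ 2) + ψ xstar / α T := by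
  set F : ℕ → EuclideanSpace ℝ (Fin d) → ℝ :=
    fun t x => ⟪x, zbar t⟫ + ψ x / α (t - 1) with hF
  set G : ℕ → ℝ := fun t => dualNorm N (gbar t) with hG
  -- one-step key inequality
  have key : ∀ t, 1 ≤ t →
      F t (y t) + (⟪gbar t, y t⟫ - α (t - 1) / 2 * G t ^ 2) ≤ F (t + 1) (y (t + 1)) := by
    intro t ht
    set a := α (t - 1) with ha
    have hapos : 0 < a := hαpos _
    set n := N (y (t + 1) - y t) with hn
    have sm : ⟪y t, zbar t⟫ + ψ (y t) / a + n ^ 2 / (2 * a) ≤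
        ⟪y (t + 1), zbar t⟫ + ψ (y (t + 1)) / a :=
      DAaux.strong_min hXcv hψ hapos (hyX t ht) (hymin t ht)
        (hyX (t + 1) (by omega)) (by positivity)
    have hαle : α t ≤ α (t - 1) := hαdec (t - 1) t (by omega)
    have hψle : ψ (y (t + 1)) / a ≤ ψ (y (t + 1)) / α t :=
      div_le_div_of_nonneg_left (hψ0 _) (hαpos t) hαle
    have hz : ⟪y (t + 1), zbar (t + 1)⟫ =
        ⟪y (t + 1), zbar t⟫ + ⟪y (t + 1), gbar t⟫ := by
      rw [hzrec t ht, inner_add_right]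
    have hFt1 : F (t + 1) (y (t + 1)) =
        ⟪y (t + 1), zbar t⟫ + ⟪y (t + 1), gbar t⟫ + ψ (y (t + 1)) / α t := by
      simp only [hF, Nat.add_sub_cancel, hz]
    have hp : ⟪gbar t, y t - y (t + 1)⟫ ≤ G t * N (y t - y (t + 1)) :=
      DAaux.pair hN _ _
    have hNeq : N (y t - y (t + 1)) = n := by
      rw [hn, ← DAaux.nneg hN (y (t + 1) - y t), neg_sub]
    have hinner : ⟪gbar t, y t - y (t + 1)⟫ = ⟪gbar t, y t⟫ - ⟪y (t + 1), gbar t⟫ := by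
      rw [inner_sub_right, real_inner_comm (gbar t) (y (t + 1))]
    rw [hNeq, hinner] at hp
    have young : (0:ℝ) ≤ n ^ 2 / (2 * a) - G t * n + a / 2 * G t ^ 2 := by
      have h : n ^ 2 / (2 * a) - G t * n + a / 2 * G t ^ 2 = (n - a * G t) ^ 2 / (2 * a) := by
        field_simp; ring
      rw [h]; positivity
    simp only [hF]
    linarith [sm, hψle, hp, young, hFt1.ge, hFt1.le]
  -- telescoping by induction
  have main : ∀ S : ℕ,
      F 1 (y 1) + ∑ t ∈ Icc 1 S, (⟪gbar t, y t⟫ - α (t - 1) / 2 * G t ^ 2) ≤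
        F (S + 1) (y (S + 1)) := by
    intro S
    induction S with
    | zero => simp
    | succ n ih =>
        rw [Finset.sum_Icc_succ_top (by omega)]
        linarith [key (n + 1) (by omega)]
  have hfin : F (T + 1) (y (T + 1)) ≤ F (T + 1) xstar :=
    hymin (T + 1) (by omega) xstar hxstar
  have hzsum : ∀ S : ℕ, zbar (S + 1) = ∑ t ∈ Icc 1 S, gbar t := by
    intro S
    induction S with
    | zero => simpa using hz1
    | succ n ih =>
        rw [Finset.sum_Icc_succ_top (by omega), ← ih, hzrec (n + 1) (by omega)]
  have hFx : F (T + 1) xstar = (∑ t ∈ Icc 1 T, ⟪gbar t, xstar⟫) + ψ xstar / α T := by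
    simp only [hF, Nat.add_sub_cancel, hzsum T, inner_sum]
    congr 1
    exact Finset.sum_congr rfl (fun t _ => real_inner_comm _ _)
  have hF1 : 0 ≤ F 1 (y 1) := by
    simp only [hF, hz1, inner_zero_right, zero_add]
    exact div_nonneg (hψ0 _) (hαpos _).le
  have hsplit : ∑ t ∈ Icc 1 T, ⟪gbar t, y t - xstar⟫ =
      (∑ t ∈ Icc 1 T, ⟪gbar t, y t⟫) - ∑ t ∈ Icc 1 T, ⟪gbar t, xstar⟫ := by
    rw [← Finset.sum_sub_distrib]
    exact Finset.sum_congr rfl (fun t _ => inner_sub_right _ _ _)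
  have hsplit2 : ∑ t ∈ Icc 1 T, (⟪gbar t, y t⟫ - α (t - 1) / 2 * G t ^ 2) =
      (∑ t ∈ Icc 1 T, ⟪gbar t, y t⟫) - ∑ t ∈ Icc 1 T, α (t - 1) / 2 * G t ^ 2 :=
    Finset.sum_sub_distrib _ _
  have hhalf : ∑ t ∈ Icc 1 T, α (t - 1) / 2 * G t ^ 2 ≤
      ∑ t ∈ Icc 1 T, α (t - 1) * G t ^ 2 :=
    Finset.sum_le_sum (fun t _ => by
      have := (hαpos (t - 1)).le
      nlinarith [sq_nonneg (G t)])
  rw [hsplit]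
  have := main T
  rw [hsplit2] at this
  rw [hFx] at hfin
  simp only [hG] at hhalf this
  have s1 : (∑ t ∈ Icc 1 T, ⟪gbar t, y t⟫) - ∑ t ∈ Icc 1 T, α (t - 1) / 2 * dualNorm N (gbar t) ^ 2 ≤ (∑ t ∈ Icc 1 T, ⟪gbar t, xstar⟫) + ψ xstar / α T := by
    have h12 := le_trans this hfin
    exact le_trans (le_add_of_nonneg_left hF1) h12
  have s2 : (∑ t ∈ Icc 1 T, ⟪gbar t, y t⟫) - (∑ t ∈ Icc 1 T, ⟪gbar t, xstar⟫) ≤ (∑ t ∈ Icc 1 T, α (t - 1) / 2 * dualNorm N (gbar t) ^ 2) + ψ xstar / α T := by linarith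
  linarith
end

section
/- Mixing tail bound for random doubly stochastic matrix products: Let P(s), P(s+1), …, P(t) be independent random n×n symmetric doubly stochastic matrices such that E[P(r)²] is the same matrix for all r, and let λ denote the second-largest eigenvalue of E[P(r)²]. Set Φ(t,s) = P(t)·P(t−1)⋯P(s). Then for every ε > 0 and every standard basis vector e_i ∈ ℝⁿ, Pr( ‖Φ(t,s)·e_i − (1/n)·𝟏‖₂ ≥ ε ) ≤ ε^{−2}·λ^{t−s+1}. -/
open Finset MeasureTheory ProbabilityTheory

/-- An `n × n` real matrix is doubly stochastic if all its entries are nonnegative and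
every row sum and every column sum equals 1. -/
def DoublyStochastic {n : ℕ} (P : Matrix (Fin n) (Fin n) ℝ) : Prop :=
  (∀ i j, 0 ≤ P i j) ∧ (∀ i, ∑ j, P i j = 1) ∧ (∀ j, ∑ i, P i j = 1)

/-- The ℓ₂-norm on `ℝⁿ`. -/
noncomputable def l2norm {n : ℕ} (v : Fin n → ℝ) : ℝ := Real.sqrt (∑ i, v i ^ 2)

/-- The second-largest eigenvalue of a symmetric doubly stochastic (hence PSD when of the
form `E[P²]`) matrix, characterized as the maximum of the quadratic form on the subspace of
mean-zero vectors (the orthogonal complement of the leading eigenvector `𝟏`). -/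
noncomputable def lambda2 {n : ℕ} (M : Matrix (Fin n) (Fin n) ℝ) : ℝ :=
  sSup {r : ℝ | ∃ v : Fin n → ℝ, (∑ i, v i) = 0 ∧ l2norm v ≤ 1 ∧
    r = ∑ i, v i * M.mulVec v i}

section Helpers

variable {n : ℕ}

lemma ds_mul {A B : Matrix (Fin n) (Fin n) ℝ} (hA : DoublyStochastic A)
    (hB : DoublyStochastic B) : DoublyStochastic (A * B) := by
  obtain ⟨hA0, hAr, hAc⟩ := hA
  obtain ⟨hB0, hBr, hBc⟩ := hB
  refine ⟨fun i j => ?_, fun i => ?_, fun j => ?_⟩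
  · rw [Matrix.mul_apply]
    exact Finset.sum_nonneg fun k _ => mul_nonneg (hA0 _ _) (hB0 _ _)
  · simp only [Matrix.mul_apply]
    rw [Finset.sum_comm]
    simp only [← Finset.mul_sum, hBr]
    simpa using hAr i
  · simp only [Matrix.mul_apply]
    rw [Finset.sum_comm]
    simp only [← Finset.sum_mul, hAc]
    simpa using hBc j

lemma lambda2_bddAbove (M : Matrix (Fin n) (Fin n) ℝ) :
    BddAbove {r : ℝ | ∃ v : Fin n → ℝ, (∑ i, v i) = 0 ∧ l2norm v ≤ 1 ∧
      r = ∑ i, v i * M.mulVec v i} := by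
  refine ⟨∑ j, ∑ k, |M j k|, ?_⟩
  rintro r ⟨v, hv0, hv1, rfl⟩
  have hsum2 : ∑ i, (v i) ^ 2 ≤ 1 := by
    have h0 : (0:ℝ) ≤ ∑ i, (v i) ^ 2 := Finset.sum_nonneg fun i _ => sq_nonneg _
    have := Real.sqrt_le_sqrt (le_of_eq (rfl : ∑ i, v i ^ 2 = ∑ i, v i ^ 2))
    unfold l2norm at hv1
    nlinarith [Real.sq_sqrt h0, Real.sqrt_nonneg (∑ i, v i ^ 2)]
  have hvb : ∀ j, |v j| ≤ 1 := by
    intro j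
    have h1 : (v j) ^ 2 ≤ ∑ i, (v i) ^ 2 :=
      Finset.single_le_sum (f := fun i => (v i) ^ 2) (fun i _ => sq_nonneg _) (Finset.mem_univ j)
    nlinarith [abs_nonneg (v j), sq_abs (v j)]
  simp only [Matrix.mulVec, dotProduct, Finset.mul_sum]
  calc ∑ i, ∑ j, v i * (M i j * v j) ≤ ∑ i, ∑ j, |M i j| := by
        refine Finset.sum_le_sum fun i _ => Finset.sum_le_sum fun j _ => ?_
        have h1 := hvb i; have h2 := hvb j
        calc v i * (M i j * v j) ≤ |v i * (M i j * v j)| := le_abs_self _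
          _ = |v i| * |M i j| * |v j| := by rw [abs_mul, abs_mul]; ring
          _ ≤ 1 * |M i j| * 1 := by
              apply mul_le_mul (mul_le_mul h1 le_rfl (abs_nonneg _) zero_le_one) h2
                (abs_nonneg _) (by positivity)
          _ = |M i j| := by ring
    _ = ∑ j, ∑ k, |M j k| := rfl

lemma lambda2_nonneg (M : Matrix (Fin n) (Fin n) ℝ) : 0 ≤ lambda2 M := by
  apply le_csSup (lambda2_bddAbove M)
  exact ⟨0, by simp, by simp [l2norm], by simp⟩

lemma lambda2_quadform_le (M : Matrix (Fin n) (Fin n) ℝ) (u : Fin n → ℝ)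
    (hu : ∑ i, u i = 0) :
    ∑ i, u i * M.mulVec u i ≤ lambda2 M * ∑ i, (u i) ^ 2 := by
  by_cases h0 : ∑ i, (u i) ^ 2 = 0
  · have hz : ∀ i, u i = 0 := by
      intro i
      have := (Finset.sum_eq_zero_iff_of_nonneg (fun i _ => sq_nonneg (u i))).mp h0 i
        (Finset.mem_univ i)
      exact (pow_eq_zero_iff two_ne_zero).mp this
    simp [funext hz, Matrix.mulVec, h0]
  · have hpos : 0 < ∑ i, (u i) ^ 2 :=
      lt_of_le_of_ne (Finset.sum_nonneg fun i _ => sq_nonneg _) (Ne.symm h0)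
    set c := Real.sqrt (∑ i, (u i) ^ 2) with hcdef
    have hc : 0 < c := Real.sqrt_pos.mpr hpos
    have hc2 : c ^ 2 = ∑ i, (u i) ^ 2 := Real.sq_sqrt hpos.le
    have hmem : (∑ i, (c⁻¹ * u i) * M.mulVec (fun j => c⁻¹ * u j) i) ∈
        {r : ℝ | ∃ v : Fin n → ℝ, (∑ i, v i) = 0 ∧ l2norm v ≤ 1 ∧
          r = ∑ i, v i * M.mulVec v i} := by
      refine ⟨fun j => c⁻¹ * u j, ?_, ?_, rfl⟩
      · rw [← Finset.mul_sum, hu, mul_zero]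
      · unfold l2norm
        have : ∑ i, (c⁻¹ * u i) ^ 2 = c⁻¹ ^ 2 * ∑ i, (u i) ^ 2 := by
          rw [Finset.mul_sum]; exact Finset.sum_congr rfl fun i _ => by ring
        rw [this, ← hc2]
        rw [show c⁻¹ ^ 2 * c ^ 2 = 1 by field_simp]
        simp
    have hle := le_csSup (lambda2_bddAbove M) hmem
    have hexp : ∑ i, (c⁻¹ * u i) * M.mulVec (fun j => c⁻¹ * u j) i
        = c⁻¹ ^ 2 * ∑ i, u i * M.mulVec u i := by
      simp only [Matrix.mulVec, dotProduct, Finset.mul_sum]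
      refine Finset.sum_congr rfl fun i _ => Finset.sum_congr rfl fun j _ => by ring
    rw [hexp] at hle
    have : (0:ℝ) < c ^ 2 := by positivity
    calc ∑ i, u i * M.mulVec u i = c ^ 2 * (c⁻¹ ^ 2 * ∑ i, u i * M.mulVec u i) := by
          field_simp
      _ ≤ c ^ 2 * lambda2 M := by
          exact mul_le_mul_of_nonneg_left hle (by positivity)
      _ = lambda2 M * ∑ i, (u i) ^ 2 := by rw [hc2]; ring

lemma sq_norm_mulVec (M : Matrix (Fin n) (Fin n) ℝ) (hM : M.IsSymm) (u : Fin n → ℝ) :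
    ∑ i, (M.mulVec u i) ^ 2 = ∑ j, ∑ k, (M * M) j k * (u j * u k) := by
  simp only [Matrix.mulVec, dotProduct, Matrix.mul_apply, sq,
    Finset.sum_mul, Finset.mul_sum]
  rw [Finset.sum_comm]
  refine Finset.sum_congr rfl fun j _ => ?_
  rw [Finset.sum_comm]
  refine Finset.sum_congr rfl fun k _ => ?_
  refine Finset.sum_congr rfl fun i _ => ?_
  rw [hM.apply j i]
  ring

end Helpers

section Gfun

noncomputable def Gfun (n s t : ℕ) (hst : s ≤ t) :
    ℕ → ({u : ℕ // s ≤ u ∧ u ≤ t} → (Fin n → Fin n → ℝ)) → Matrix (Fin n) (Fin n) ℝ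
  | 0, x => Matrix.of (x ⟨s, le_rfl, hst⟩)
  | (k+1), x =>
      if h : s + (k+1) ≤ t then
        Matrix.of (x ⟨s + (k+1), ⟨by omega, h⟩⟩) * Gfun n s t hst k x
      else Gfun n s t hst k x

lemma Gfun_congr (n s t : ℕ) (hst : s ≤ t) (k : ℕ)
    (x y : {u : ℕ // s ≤ u ∧ u ≤ t} → (Fin n → Fin n → ℝ))
    (h : ∀ u : {u : ℕ // s ≤ u ∧ u ≤ t}, u.1 ≤ s + k → x u = y u) :
    Gfun n s t hst k x = Gfun n s t hst k y := by
  induction k with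
  | zero => simp only [Gfun]; rw [h ⟨s, le_rfl, hst⟩ (Nat.le_add_right s 0)]
  | succ k ih =>
    have ih' := ih (fun u hu => h u (by omega))
    simp only [Gfun]
    split
    · rw [h ⟨s + (k+1), _⟩ le_rfl, ih']
    · exact ih'

lemma Gfun_meas (n s t : ℕ) (hst : s ≤ t) (k : ℕ) :
    ∀ j l : Fin n, Measurable (fun x => Gfun n s t hst k x j l) := by
  induction k with
  | zero =>
    intro j l
    show Measurable (fun x : {u : ℕ // s ≤ u ∧ u ≤ t} → (Fin n → Fin n → ℝ) =>
        x ⟨s, le_rfl, hst⟩ j l)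
    exact ((measurable_pi_apply _).eval).eval
  | succ k ih =>
    intro j l
    simp only [Gfun]
    by_cases h : s + (k+1) ≤ t
    · simp only [dif_pos h, Matrix.mul_apply, Matrix.of_apply]
      exact Finset.measurable_sum _ fun m _ =>
        (((measurable_pi_apply _).eval).eval).fun_mul (ih m l)
    · simpa only [dif_neg h] using ih j l

end Gfun

/-- **Mixing tail bound for random doubly stochastic matrix products.**
With `Φ(t,s) = P(t) P(t−1) ⋯ P(s)` a product of independent random symmetric doubly
stochastic matrices whose squares share a common mean `Q` with second-largest eigenvalue
`λ`, one has `Pr(‖Φ(t,s) e_i − 𝟏/n‖₂ ≥ ε) ≤ ε⁻² λ^{t−s+1}`. -/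
theorem random_product_mixing_tail
    {n : ℕ} (hn : 0 < n)
    {Ω : Type*} [MeasurableSpace Ω] (μ : Measure Ω) [IsProbabilityMeasure μ]
    (s t : ℕ) (hst : s ≤ t)
    (P : ℕ → Ω → Fin n → Fin n → ℝ)
    (hmeas : ∀ r, Measurable (P r))
    (hds : ∀ r ω, s ≤ r → r ≤ t → DoublyStochastic (Matrix.of (P r ω)))
    (hsym : ∀ r ω, s ≤ r → r ≤ t → (Matrix.of (P r ω)).IsSymm)
    (hindep : iIndepFun
      (fun r : {u : ℕ // s ≤ u ∧ u ≤ t} => P r.1) μ)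
    (Q : Matrix (Fin n) (Fin n) ℝ)
    (hQ : ∀ r, s ≤ r → r ≤ t → ∀ i j,
      Q i j = ∫ ω, (Matrix.of (P r ω) * Matrix.of (P r ω)) i j ∂μ)
    (Φ : ℕ → Ω → Matrix (Fin n) (Fin n) ℝ)
    (hΦs : ∀ ω, Φ s ω = Matrix.of (P s ω))
    (hΦstep : ∀ r ω, s ≤ r → r < t → Φ (r + 1) ω = Matrix.of (P (r + 1) ω) * Φ r ω)
    (ε : ℝ) (hε : 0 < ε) (i : Fin n) :
    μ {ω | ε ≤ l2norm ((Φ t ω).mulVec (Pi.single i 1) -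
        (n : ℝ)⁻¹ • (fun _ : Fin n => (1 : ℝ)))} ≤
      ENNReal.ofReal (ε⁻¹ ^ 2 * lambda2 Q ^ (t - s + 1)) := by
  classical
  have hnR : (0:ℝ) < n := by exact_mod_cast hn
  -- the centered vector
  set v : ℕ → Ω → Fin n → ℝ := fun r ω j => Φ r ω j i - (n:ℝ)⁻¹ with hvdef
  -- tuple of matrices
  set tup : Ω → {u : ℕ // s ≤ u ∧ u ≤ t} → (Fin n → Fin n → ℝ) :=
    fun ω u => P u.1 ω with htupdef
  have htupm : Measurable tup := measurable_pi_lambda _ fun u => hmeas u.1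
  -- Φ as a function of the tuple
  have hΦG : ∀ r, s ≤ r → r ≤ t → ∀ ω, Φ r ω = Gfun n s t hst (r - s) (tup ω) := by
    intro r hr
    induction r, hr using Nat.le_induction with
    | base =>
      intro _ ω
      rw [hΦs ω, Nat.sub_self]
      rfl
    | succ r hr ih =>
      intro hrt ω
      rw [hΦstep r ω hr (by omega), ih (by omega) ω,
        show r + 1 - s = (r - s) + 1 by omega]
      simp only [Gfun]
      rw [dif_pos (show s + (r - s + 1) ≤ t by omega)]
      congr 2
      show P (r + 1) ω = P (s + (r - s + 1)) ω
      rw [show s + (r - s + 1) = r + 1 by omega]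
  -- measurability of Φ entries
  have hΦm : ∀ r, s ≤ r → r ≤ t → ∀ j l, Measurable (fun ω => Φ r ω j l) := by
    intro r hr hrt j l
    have : (fun ω => Φ r ω j l) = fun ω => Gfun n s t hst (r - s) (tup ω) j l :=
      funext fun ω => by rw [hΦG r hr hrt ω]
    rw [this]
    exact (Gfun_meas n s t hst (r - s) j l).comp htupm
  -- Φ is doubly stochastic
  have hΦds : ∀ r, s ≤ r → r ≤ t → ∀ ω, DoublyStochastic (Φ r ω) := by
    intro r hr
    induction r, hr using Nat.le_induction with
    | base => intro _ ω; rw [hΦs]; exact hds s ω le_rfl hst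
    | succ r hr ih =>
      intro hrt ω
      rw [hΦstep r ω hr (by omega)]
      exact ds_mul (hds (r+1) ω (by omega) hrt) (ih (by omega) ω)
  -- entries of Φ are in [0,1]
  have hΦ01 : ∀ r, s ≤ r → r ≤ t → ∀ ω j l, 0 ≤ Φ r ω j l ∧ Φ r ω j l ≤ 1 := by
    intro r hr hrt ω j l
    obtain ⟨h0, hrow, _⟩ := hΦds r hr hrt ω
    refine ⟨h0 j l, ?_⟩
    calc Φ r ω j l ≤ ∑ m, Φ r ω j m :=
          Finset.single_le_sum (f := fun m => Φ r ω j m) (fun m _ => h0 j m)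
            (Finset.mem_univ l)
      _ = 1 := hrow j
  -- basic facts about v
  have hvsum : ∀ r, s ≤ r → r ≤ t → ∀ ω, ∑ j, v r ω j = 0 := by
    intro r hr hrt ω
    obtain ⟨_, _, hcol⟩ := hΦds r hr hrt ω
    simp only [hvdef]
    rw [Finset.sum_sub_distrib, hcol i, Finset.sum_const, Finset.card_univ,
      Fintype.card_fin, nsmul_eq_mul]
    field_simp
    simp
  have hvb : ∀ r, s ≤ r → r ≤ t → ∀ ω j, |v r ω j| ≤ 1 := by
    intro r hr hrt ω j
    obtain ⟨h0, h1⟩ := hΦ01 r hr hrt ω j i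
    have hinv0 : (0:ℝ) ≤ (n:ℝ)⁻¹ := by positivity
    have hinv1 : (n:ℝ)⁻¹ ≤ 1 := by
      rw [inv_le_one_iff₀]; right; exact_mod_cast hn
    rw [abs_le]; constructor <;> simp only [hvdef] <;> linarith
  have hvm : ∀ r, s ≤ r → r ≤ t → ∀ j, Measurable (fun ω => v r ω j) := by
    intro r hr hrt j
    exact (hΦm r hr hrt j i).sub measurable_const
  -- integrability helper
  have hint : ∀ (f : Ω → ℝ) (C : ℝ), Measurable f → (∀ ω, |f ω| ≤ C) → Integrable f μ := by
    intro f C hf hb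
    exact (integrable_const C).mono' hf.aestronglyMeasurable
      (Filter.Eventually.of_forall fun ω => by simpa [Real.norm_eq_abs] using hb ω)
  -- measurability and bound of entries of P² on [s,t]
  have hM2meas : ∀ m (j k : Fin n),
      Measurable fun ω => (Matrix.of (P m ω) * Matrix.of (P m ω)) j k := by
    intro m j k
    simp only [Matrix.mul_apply]
    exact Finset.measurable_sum _ fun l _ =>
      (((hmeas m).eval).eval).mul (((hmeas m).eval).eval)
  have hM2b : ∀ m, s ≤ m → m ≤ t → ∀ ω (j k : Fin n),
      |(Matrix.of (P m ω) * Matrix.of (P m ω)) j k| ≤ 1 := by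
    intro m hm1 hm2 ω j k
    obtain ⟨h0, hrow, _⟩ := ds_mul (hds m ω hm1 hm2) (hds m ω hm1 hm2)
    rw [abs_le]
    refine ⟨by linarith [h0 j k], ?_⟩
    calc (Matrix.of (P m ω) * Matrix.of (P m ω)) j k
        ≤ ∑ l, (Matrix.of (P m ω) * Matrix.of (P m ω)) j l :=
          Finset.single_le_sum (f := fun l => (Matrix.of (P m ω) * Matrix.of (P m ω)) j l)
            (fun l _ => h0 j l) (Finset.mem_univ k)
      _ = 1 := hrow j
  -- the main one-step estimate
  have main_step : ∀ (m : ℕ), s ≤ m → m ≤ t → ∀ (u : Ω → Fin n → ℝ),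
      (∀ ω, ∑ j, u ω j = 0) → (∀ ω j, |u ω j| ≤ 1) → (∀ j, Measurable fun ω => u ω j) →
      (∀ j k, ∫ ω, ((Matrix.of (P m ω) * Matrix.of (P m ω)) j k) * (u ω j * u ω k) ∂μ
          = Q j k * ∫ ω, u ω j * u ω k ∂μ) →
      ∫ ω, ∑ j, ((Matrix.of (P m ω)).mulVec (u ω) j) ^ 2 ∂μ ≤
        lambda2 Q * ∫ ω, ∑ j, (u ω j) ^ 2 ∂μ := by
    intro m hm1 hm2 u hu0 hub hum hcov
    have hterm_int : ∀ (j k : Fin n),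
        Integrable (fun ω => ((Matrix.of (P m ω) * Matrix.of (P m ω)) j k) *
          (u ω j * u ω k)) μ := by
      intro j k
      refine hint _ 1 ((hM2meas m j k).mul ((hum j).mul (hum k))) fun ω => ?_
      have h1 := hM2b m hm1 hm2 ω j k
      have h2 := hub ω j
      have h3 := hub ω k
      calc |(Matrix.of (P m ω) * Matrix.of (P m ω)) j k * (u ω j * u ω k)|
          = |(Matrix.of (P m ω) * Matrix.of (P m ω)) j k| * (|u ω j| * |u ω k|) := by
            rw [abs_mul, abs_mul]
        _ ≤ 1 * (1 * 1) := by
            apply mul_le_mul h1 _ (by positivity) zero_le_one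
            exact mul_le_mul h2 h3 (abs_nonneg _) zero_le_one
        _ = 1 := by ring
    calc ∫ ω, ∑ j, ((Matrix.of (P m ω)).mulVec (u ω) j) ^ 2 ∂μ
        = ∫ ω, ∑ j, ∑ k, ((Matrix.of (P m ω) * Matrix.of (P m ω)) j k) *
            (u ω j * u ω k) ∂μ := by
          refine integral_congr_ae (Filter.Eventually.of_forall fun ω => ?_)
          exact sq_norm_mulVec _ (hsym m ω hm1 hm2) _
      _ = ∑ j, ∑ k, ∫ ω, ((Matrix.of (P m ω) * Matrix.of (P m ω)) j k) *
            (u ω j * u ω k) ∂μ := by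
          rw [integral_finset_sum _ fun j _ => integrable_finset_sum _ fun k _ =>
            hterm_int j k]
          exact Finset.sum_congr rfl fun j _ =>
            integral_finset_sum _ fun k _ => hterm_int j k
      _ = ∑ j, ∑ k, Q j k * ∫ ω, u ω j * u ω k ∂μ :=
          Finset.sum_congr rfl fun j _ => Finset.sum_congr rfl fun k _ => hcov j k
      _ = ∫ ω, ∑ j, ∑ k, Q j k * (u ω j * u ω k) ∂μ := by
          rw [integral_finset_sum _ fun j _ => integrable_finset_sum _ fun k _ =>
            hint (fun ω => Q j k * (u ω j * u ω k)) |Q j k| (measurable_const.mul ((hum j).mul (hum k))) fun ω => by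
              have h2 := hub ω j; have h3 := hub ω k
              calc |Q j k * (u ω j * u ω k)| = |Q j k| * (|u ω j| * |u ω k|) := by
                    rw [abs_mul, abs_mul]
                _ ≤ |Q j k| * (1 * 1) := by
                    apply mul_le_mul_of_nonneg_left _ (abs_nonneg _)
                    exact mul_le_mul h2 h3 (abs_nonneg _) zero_le_one
                _ = |Q j k| := by ring]
          refine Finset.sum_congr rfl fun j _ => ?_
          rw [integral_finset_sum _ fun k _ =>
            hint (fun ω => Q j k * (u ω j * u ω k)) |Q j k| (measurable_const.mul ((hum j).mul (hum k))) fun ω => by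
              have h2 := hub ω j; have h3 := hub ω k
              calc |Q j k * (u ω j * u ω k)| = |Q j k| * (|u ω j| * |u ω k|) := by
                    rw [abs_mul, abs_mul]
                _ ≤ |Q j k| * (1 * 1) := by
                    apply mul_le_mul_of_nonneg_left _ (abs_nonneg _)
                    exact mul_le_mul h2 h3 (abs_nonneg _) zero_le_one
                _ = |Q j k| := by ring]
          exact Finset.sum_congr rfl fun k _ => (integral_const_mul _ _).symm
      _ ≤ ∫ ω, lambda2 Q * ∑ j, (u ω j) ^ 2 ∂μ := by
          apply integral_mono
          · refine hint _ (∑ j, ∑ k, |Q j k|) ?_ ?_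
            · exact Finset.measurable_sum _ fun j _ => Finset.measurable_sum _ fun k _ =>
                measurable_const.mul ((hum j).mul (hum k))
            · intro ω
              calc |∑ j, ∑ k, Q j k * (u ω j * u ω k)|
                  ≤ ∑ j, |∑ k, Q j k * (u ω j * u ω k)| := Finset.abs_sum_le_sum_abs _ _
                _ ≤ ∑ j, ∑ k, |Q j k * (u ω j * u ω k)| :=
                    Finset.sum_le_sum fun j _ => Finset.abs_sum_le_sum_abs _ _
                _ ≤ ∑ j, ∑ k, |Q j k| := by
                    refine Finset.sum_le_sum fun j _ => Finset.sum_le_sum fun k _ => ?_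
                    have h2 := hub ω j; have h3 := hub ω k
                    calc |Q j k * (u ω j * u ω k)|
                        = |Q j k| * (|u ω j| * |u ω k|) := by rw [abs_mul, abs_mul]
                      _ ≤ |Q j k| * (1 * 1) := by
                          apply mul_le_mul_of_nonneg_left _ (abs_nonneg _)
                          exact mul_le_mul h2 h3 (abs_nonneg _) zero_le_one
                      _ = |Q j k| := by ring
          · refine hint _ (|lambda2 Q| * n) ?_ ?_
            · exact measurable_const.mul
                (Finset.measurable_sum _ fun j _ => ((hum j).pow measurable_const))
            · intro ω
              have hb : ∑ j, (u ω j) ^ 2 ≤ n := by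
                calc ∑ j, (u ω j) ^ 2 ≤ ∑ _j : Fin n, (1:ℝ) := by
                      refine Finset.sum_le_sum fun j _ => ?_
                      have := hub ω j
                      nlinarith [sq_abs (u ω j), abs_nonneg (u ω j)]
                  _ = n := by simp
              have hb0 : (0:ℝ) ≤ ∑ j, (u ω j) ^ 2 :=
                Finset.sum_nonneg fun j _ => sq_nonneg _
              rw [abs_mul, abs_of_nonneg hb0]
              exact mul_le_mul_of_nonneg_left hb (abs_nonneg _)
          · intro ω
            have h := lambda2_quadform_le Q (u ω) (hu0 ω)
            calc ∑ j, ∑ k, Q j k * (u ω j * u ω k)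
                = ∑ j, u ω j * Q.mulVec (u ω) j := by
                  refine Finset.sum_congr rfl fun j _ => ?_
                  simp only [Matrix.mulVec, dotProduct, Finset.mul_sum]
                  exact Finset.sum_congr rfl fun k _ => by ring
              _ ≤ _ := h
      _ = lambda2 Q * ∫ ω, ∑ j, (u ω j) ^ 2 ∂μ := integral_const_mul _ _
  -- the deterministic base vector
  set w : Fin n → ℝ := fun j => (Pi.single i 1 : Fin n → ℝ) j - (n:ℝ)⁻¹ with hwdef
  have hsingle1 : ∑ j, (Pi.single i 1 : Fin n → ℝ) j = 1 := by simp
  have hsingle2 : ∑ j, ((Pi.single i 1 : Fin n → ℝ) j) ^ 2 = 1 := by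
    simp [Pi.single_apply, sq, ite_mul, mul_ite]
  have hw0 : ∑ j, w j = 0 := by
    simp only [hwdef]
    rw [Finset.sum_sub_distrib, hsingle1, Finset.sum_const, Finset.card_univ,
      Fintype.card_fin, nsmul_eq_mul]
    field_simp
    simp
  have hwb : ∀ j, |w j| ≤ 1 := by
    intro j
    have hinv0 : (0:ℝ) ≤ (n:ℝ)⁻¹ := by positivity
    have hinv1 : (n:ℝ)⁻¹ ≤ 1 := by
      rw [inv_le_one_iff₀]; right; exact_mod_cast hn
    have : (Pi.single i 1 : Fin n → ℝ) j = 0 ∨ (Pi.single i 1 : Fin n → ℝ) j = 1 := by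
      rw [Pi.single_apply]; split <;> simp
    rw [abs_le]
    rcases this with h | h <;> constructor <;> simp only [hwdef, h] <;> linarith
  have hw2 : ∑ j, w j ^ 2 ≤ 1 := by
    have hexp : ∀ j, w j ^ 2 =
        ((Pi.single i 1 : Fin n → ℝ) j) ^ 2 - 2 * (n:ℝ)⁻¹ * (Pi.single i 1 : Fin n → ℝ) j + (n:ℝ)⁻¹ ^ 2 := by
      intro j; simp only [hwdef]; ring
    rw [Finset.sum_congr rfl fun j _ => hexp j, Finset.sum_add_distrib,
      Finset.sum_sub_distrib, hsingle2, ← Finset.mul_sum, hsingle1, Finset.sum_const,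
      Finset.card_univ, Fintype.card_fin, nsmul_eq_mul]
    have : (n:ℝ) * ((n:ℝ)⁻¹ ^ 2) = (n:ℝ)⁻¹ := by field_simp
    rw [this]
    have : (0:ℝ) ≤ (n:ℝ)⁻¹ := by positivity
    linarith
  have hvs : ∀ ω, v s ω = (Matrix.of (P s ω)).mulVec w := by
    intro ω; funext j
    have hrow := (hds s ω le_rfl hst).2.1 j
    simp only [hvdef, hwdef, hΦs ω, Matrix.mulVec, dotProduct, mul_sub,
      Finset.sum_sub_distrib]
    congr 1
    · simp [Pi.single_apply, mul_ite]
    · rw [← Finset.sum_mul]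
      rw [show ∑ k, Matrix.of (P s ω) j k = 1 from hrow, one_mul]
  -- the key inductive estimate
  have key : ∀ r, s ≤ r → r ≤ t →
      ∫ ω, ∑ j, (v r ω j) ^ 2 ∂μ ≤ lambda2 Q ^ (r - s + 1) := by
    intro r hr
    induction r, hr using Nat.le_induction with
    | base =>
      intro _
      rw [Nat.sub_self, pow_one]
      have hcov : ∀ j k, ∫ ω, ((Matrix.of (P s ω) * Matrix.of (P s ω)) j k) *
          ((fun (_ : Ω) => w) ω j * (fun (_ : Ω) => w) ω k) ∂μ
          = Q j k * ∫ ω, (fun (_ : Ω) => w) ω j * (fun (_ : Ω) => w) ω k ∂μ := by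
        intro j k
        rw [integral_mul_const, integral_const]
        rw [hQ s le_rfl hst j k]
        simp [mul_comm]
      have h := main_step s le_rfl hst (fun _ => w) (fun _ => hw0) (fun _ j => hwb j)
        (fun j => measurable_const) hcov
      calc ∫ ω, ∑ j, (v s ω j) ^ 2 ∂μ
          = ∫ ω, ∑ j, ((Matrix.of (P s ω)).mulVec w j) ^ 2 ∂μ := by
            refine integral_congr_ae (Filter.Eventually.of_forall fun ω => ?_)
            simp only [hvs ω]
        _ ≤ lambda2 Q * ∫ (_ : Ω), ∑ j, w j ^ 2 ∂μ := h
        _ = lambda2 Q * ∑ j, w j ^ 2 := by rw [integral_const]; simp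
        _ ≤ lambda2 Q * 1 := mul_le_mul_of_nonneg_left hw2 (lambda2_nonneg Q)
        _ = lambda2 Q := mul_one _
    | succ r hr ih =>
      intro hr1t
      have hrt' : r ≤ t := by omega
      have ha1 : s ≤ r + 1 := by omega
      have hcov : ∀ j k, ∫ ω, ((Matrix.of (P (r+1) ω) * Matrix.of (P (r+1) ω)) j k) *
          (v r ω j * v r ω k) ∂μ = Q j k * ∫ ω, v r ω j * v r ω k ∂μ := by
        intro j k
        set a : {u : ℕ // s ≤ u ∧ u ≤ t} := ⟨r+1, ha1, hr1t⟩ with hadef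
        set S : Finset {u : ℕ // s ≤ u ∧ u ≤ t} := {a} with hSdef
        set T : Finset {u : ℕ // s ≤ u ∧ u ≤ t} :=
          (Finset.Icc s r).subtype (fun u => s ≤ u ∧ u ≤ t) with hTdef
        have hST : Disjoint S T := by
          rw [Finset.disjoint_left]
          intro b hb hbT
          rw [hSdef, Finset.mem_singleton] at hb
          rw [hTdef, Finset.mem_subtype, Finset.mem_Icc] at hbT
          subst hb
          have : (a : {u : ℕ // s ≤ u ∧ u ≤ t}).1 = r + 1 := rfl
          omega
        have base := hindep.indepFun_finset S T hST (fun u => hmeas u.1)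
        have hamem : a ∈ S := Finset.mem_singleton_self a
        set φ : ({x // x ∈ S} → (Fin n → Fin n → ℝ)) → ℝ := fun y =>
          (Matrix.of (y ⟨a, hamem⟩) * Matrix.of (y ⟨a, hamem⟩)) j k with hφdef
        have hφ : Measurable φ := by
          simp only [hφdef, Matrix.mul_apply, Matrix.of_apply]
          exact Finset.measurable_sum _ fun l _ =>
            (((measurable_pi_apply _).eval).eval).fun_mul (((measurable_pi_apply _).eval).eval)
        set ψ : ({x // x ∈ T} → (Fin n → Fin n → ℝ)) → ℝ := fun y =>
          (Gfun n s t hst (r - s) (fun u => if hu : u ∈ T then y ⟨u, hu⟩ else 0) j i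
            - (n:ℝ)⁻¹) *
          (Gfun n s t hst (r - s) (fun u => if hu : u ∈ T then y ⟨u, hu⟩ else 0) k i
            - (n:ℝ)⁻¹) with hψdef
        have hx : Measurable (fun (y : {x // x ∈ T} → (Fin n → Fin n → ℝ)) =>
            (fun u => if hu : u ∈ T then y ⟨u, hu⟩ else 0)) := by
          apply measurable_pi_lambda
          intro u
          by_cases hu : u ∈ T
          · simp only [dif_pos hu]; exact measurable_pi_apply _
          · simp only [dif_neg hu]; exact measurable_const
        have hψ : Measurable ψ := by
          apply Measurable.mul
          · exact ((Gfun_meas n s t hst (r-s) j i).comp hx).sub measurable_const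
          · exact ((Gfun_meas n s t hst (r-s) k i).comp hx).sub measurable_const
        have hXeq : (fun ω => ((Matrix.of (P (r+1) ω) * Matrix.of (P (r+1) ω)) j k))
            = φ ∘ (fun ω (u : {x // x ∈ S}) => P u.1.1 ω) := rfl
        have hYeq : (fun ω => v r ω j * v r ω k)
            = ψ ∘ (fun ω (u : {x // x ∈ T}) => P u.1.1 ω) := by
          funext ω
          have hGT : Gfun n s t hst (r - s)
              (fun u => if hu : u ∈ T then P u.1 ω else 0)
              = Gfun n s t hst (r - s) (tup ω) := by
            apply Gfun_congr
            intro u hu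
            have huT : u ∈ T := by
              rw [hTdef, Finset.mem_subtype, Finset.mem_Icc]
              exact ⟨u.2.1, by omega⟩
            rw [dif_pos huT]
          show v r ω j * v r ω k =
            (Gfun n s t hst (r - s) (fun u => if hu : u ∈ T then P u.1 ω else 0) j i
              - (n:ℝ)⁻¹) *
            (Gfun n s t hst (r - s) (fun u => if hu : u ∈ T then P u.1 ω else 0) k i
              - (n:ℝ)⁻¹)
          rw [hGT, ← hΦG r hr hrt' ω]
        have hindXY : IndepFun
            (fun ω => ((Matrix.of (P (r+1) ω) * Matrix.of (P (r+1) ω)) j k))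
            (fun ω => v r ω j * v r ω k) μ := by
          rw [hXeq, hYeq]
          exact base.comp hφ hψ
        have hXint : Integrable
            (fun ω => ((Matrix.of (P (r+1) ω) * Matrix.of (P (r+1) ω)) j k)) μ :=
          hint _ 1 (hM2meas (r+1) j k) (fun ω => hM2b (r+1) ha1 hr1t ω j k)
        have hYint : Integrable (fun ω => v r ω j * v r ω k) μ := by
          refine hint _ 1 ((hvm r hr hrt' j).mul (hvm r hr hrt' k)) fun ω => ?_
          rw [abs_mul]
          exact mul_le_one₀ (hvb r hr hrt' ω j) (abs_nonneg _) (hvb r hr hrt' ω k)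
        have hmul := hindXY.integral_fun_mul_eq_mul_integral hXint.aestronglyMeasurable
          hYint.aestronglyMeasurable
        calc ∫ ω, ((Matrix.of (P (r+1) ω) * Matrix.of (P (r+1) ω)) j k) *
              (v r ω j * v r ω k) ∂μ
            = (∫ ω, ((Matrix.of (P (r+1) ω) * Matrix.of (P (r+1) ω)) j k) ∂μ) *
              ∫ ω, v r ω j * v r ω k ∂μ := hmul
          _ = Q j k * ∫ ω, v r ω j * v r ω k ∂μ := by rw [← hQ (r+1) ha1 hr1t j k]
      have hvstep : ∀ ω, v (r+1) ω = (Matrix.of (P (r+1) ω)).mulVec (v r ω) := by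
        intro ω; funext j'
        have hrow := (hds (r+1) ω ha1 hr1t).2.1 j'
        simp only [hvdef, Matrix.mulVec, dotProduct, mul_sub]
        rw [hΦstep r ω hr (by omega), Finset.sum_sub_distrib]
        simp only [Matrix.mul_apply]
        congr 1
        rw [← Finset.sum_mul]
        rw [show ∑ k, Matrix.of (P (r+1) ω) j' k = 1 from hrow, one_mul]
      have h := main_step (r+1) ha1 hr1t (v r) (hvsum r hr hrt') (hvb r hr hrt')
        (hvm r hr hrt') hcov
      calc ∫ ω, ∑ j, (v (r+1) ω j) ^ 2 ∂μ
          = ∫ ω, ∑ j, ((Matrix.of (P (r+1) ω)).mulVec (v r ω) j) ^ 2 ∂μ := by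
            refine integral_congr_ae (Filter.Eventually.of_forall fun ω => ?_)
            simp only [hvstep ω]
        _ ≤ lambda2 Q * ∫ ω, ∑ j, (v r ω j) ^ 2 ∂μ := h
        _ ≤ lambda2 Q * lambda2 Q ^ (r - s + 1) :=
            mul_le_mul_of_nonneg_left (ih hrt') (lambda2_nonneg Q)
        _ = lambda2 Q ^ (r + 1 - s + 1) := by
            rw [← pow_succ']
            congr 1
            omega
  -- Markov / Chebyshev step
  have hkey := key t hst le_rfl
  have hgm : Measurable fun ω => ∑ j, (v t ω j) ^ 2 :=
    Finset.measurable_sum _ fun j _ => (hvm t hst le_rfl j).pow measurable_const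
  have hgint : Integrable (fun ω => ∑ j, (v t ω j) ^ 2) μ := by
    refine hint _ n hgm fun ω => ?_
    have hb1 : ∀ j, (v t ω j) ^ 2 ≤ 1 := fun j => by
      have := hvb t hst le_rfl ω j
      nlinarith [sq_abs (v t ω j), abs_nonneg (v t ω j)]
    have h0 : (0:ℝ) ≤ ∑ j, (v t ω j) ^ 2 := Finset.sum_nonneg fun j _ => sq_nonneg _
    rw [abs_of_nonneg h0]
    calc ∑ j, (v t ω j) ^ 2 ≤ ∑ _j : Fin n, (1:ℝ) :=
          Finset.sum_le_sum fun j _ => hb1 j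
      _ = n := by simp
  have hsubset : {ω | ε ≤ l2norm ((Φ t ω).mulVec (Pi.single i 1) -
      (n:ℝ)⁻¹ • (fun _ : Fin n => (1:ℝ)))} ⊆ {ω | ε ^ 2 ≤ ∑ j, (v t ω j) ^ 2} := by
    intro ω hω
    rw [Set.mem_setOf_eq] at hω ⊢
    have hveq : ((Φ t ω).mulVec (Pi.single i 1) - (n:ℝ)⁻¹ • (fun _ : Fin n => (1:ℝ)))
        = v t ω := by
      funext j
      simp only [Pi.sub_apply, Pi.smul_apply, smul_eq_mul, mul_one, hvdef,
        Matrix.mulVec_single, Matrix.col_apply, MulOpposite.op_one, one_smul]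
    rw [hveq] at hω
    unfold l2norm at hω
    exact (Real.le_sqrt' hε).mp hω
  have hmark := mul_meas_ge_le_integral_of_nonneg (μ := μ)
    (Filter.Eventually.of_forall fun ω => Finset.sum_nonneg fun j _ => sq_nonneg (v t ω j))
    hgint (ε ^ 2)
  have hμfin : μ {x | ε ^ 2 ≤ ∑ j, (v t x j) ^ 2} ≠ ⊤ := measure_ne_top μ _
  have htoR : (μ {x | ε ^ 2 ≤ ∑ j, (v t x j) ^ 2}).toReal ≤
      ε⁻¹ ^ 2 * lambda2 Q ^ (t - s + 1) := by
    have h1 : ε ^ 2 * (μ {x | ε ^ 2 ≤ ∑ j, (v t x j) ^ 2}).toReal ≤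
        lambda2 Q ^ (t - s + 1) := le_trans hmark hkey
    rw [inv_pow]
    calc (μ {x | ε ^ 2 ≤ ∑ j, (v t x j) ^ 2}).toReal
        = (ε ^ 2)⁻¹ * (ε ^ 2 * (μ {x | ε ^ 2 ≤ ∑ j, (v t x j) ^ 2}).toReal) := by
          field_simp
      _ ≤ (ε ^ 2)⁻¹ * lambda2 Q ^ (t - s + 1) :=
          mul_le_mul_of_nonneg_left h1 (by positivity)
  calc μ {ω | ε ≤ l2norm ((Φ t ω).mulVec (Pi.single i 1) -
        (n:ℝ)⁻¹ • (fun _ : Fin n => (1:ℝ)))}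
      ≤ μ {x | ε ^ 2 ≤ ∑ j, (v t x j) ^ 2} := measure_mono hsubset
    _ = ENNReal.ofReal ((μ {x | ε ^ 2 ≤ ∑ j, (v t x j) ^ 2}).toReal) :=
        (ENNReal.ofReal_toReal hμfin).symm
    _ ≤ ENNReal.ofReal (ε⁻¹ ^ 2 * lambda2 Q ^ (t - s + 1)) :=
        ENNReal.ofReal_le_ofReal htoR
end
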